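/- Fix p ∈ (1,∞), a Banach space X, m, N ∈ ℕ, and invertible isometries T₁,…,T_m ∈ L(X). Set T := (1/m) Σ_{k=1}^m T_k. Let A be the set of maps α : {1,…,N} → {1,…,m}, σ the N-cycle on {1,…,N}, and define U := ⊕_{α∈A} U_α on Y := ℓ^p_{N·m^N}(X) = (X^N)^A where U_α(x_k)_k = (T_{α(k)} x_{σ(k)})_k. Define J : X → Y by Jx = ((N m^N)^{-1/p} x)_{k,α} and Q : Y → X by Q(x_{k,α}) = (N m^N)^{-1/q} Σ_{α,k} x_{k,α}, where 1/p + 1/q = 1. Then J is an isometry, Q is a contraction, U is an invertible isometry, and Tⁿ = Q Uⁿ J for all n ∈ {0,…,N}. -/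

import Mathlib

open scoped ENNReal

section Stmt18

variable (p : ℝ) {𝕜 : Type*} [RCLike 𝕜] {X : Type*} [NormedAddCommGroup X]
  [NormedSpace 𝕜 X] (m N : ℕ)

/-- The block operator `U = ⊕_α U_α` on `ℓ^p_{N·m^N}(X) = (X^N)^A`, where
`U_α (x_k)_k = (T_{α(k)} x_{σ(k)})_k` and `σ` is the `N`-cycle. -/
noncomputable def bigU (Ts : Fin m → (X ≃ₗᵢ[𝕜] X))
    (y : PiLp (ENNReal.ofReal p) (fun _ : (Fin N → Fin m) × Fin N => X)) :
    PiLp (ENNReal.ofReal p) (fun _ : (Fin N → Fin m) × Fin N => X) :=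
  (WithLp.equiv (ENNReal.ofReal p) (∀ _ : (Fin N → Fin m) × Fin N, X)).symm
    (fun i => Ts (i.1 i.2)
      ((WithLp.equiv (ENNReal.ofReal p) (∀ _ : (Fin N → Fin m) × Fin N, X)) y
        (i.1, finRotate N i.2)))

/-- The injection `J : X → (X^N)^A`, `J x = ((N m^N)^{-1/p} x)_{k,α}`. -/
noncomputable def bigJ (x : X) :
    PiLp (ENNReal.ofReal p) (fun _ : (Fin N → Fin m) × Fin N => X) :=
  (WithLp.equiv (ENNReal.ofReal p) (∀ _ : (Fin N → Fin m) × Fin N, X)).symm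
    (fun _ => ((((N * m ^ N : ℝ)) ^ (-(1 / p)) : ℝ) : 𝕜) • x)

/-- The map `Q : (X^N)^A → X`, `Q((x_{k,α})) = (N m^N)^{-1/q} ∑_{α,k} x_{k,α}`. -/
noncomputable def bigQ (q : ℝ)
    (y : PiLp (ENNReal.ofReal p) (fun _ : (Fin N → Fin m) × Fin N => X)) : X :=
  ((((N * m ^ N : ℝ)) ^ (-(1 / q)) : ℝ) : 𝕜) •
    ∑ i : (Fin N → Fin m) × Fin N,
      (WithLp.equiv (ENNReal.ofReal p) (∀ _ : (Fin N → Fin m) × Fin N, X)) y i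

/-! ### Auxiliary definitions and lemmas -/

/-- `V n β = T_{β 0} ∘ T_{β 1} ∘ ⋯ ∘ T_{β (n-1)}`. -/
noncomputable def Vop18 (Ts : Fin m → (X ≃ₗᵢ[𝕜] X)) : (n : ℕ) → (Fin n → Fin m) → (X →L[𝕜] X)
  | 0, _ => 1
  | n+1, β => (Ts (β 0)).toLinearIsometry.toContinuousLinearMap * Vop18 Ts n (β ∘ Fin.succ)

/-- `W n α k = T_{α k} ∘ T_{α (σ k)} ∘ ⋯ ∘ T_{α (σ^{n-1} k)}`. -/
noncomputable def Wop18 (Ts : Fin m → (X ≃ₗᵢ[𝕜] X)) :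
    (n : ℕ) → (Fin N → Fin m) → Fin N → (X →L[𝕜] X)
  | 0, _, _ => 1
  | n+1, α, k => (Ts (α k)).toLinearIsometry.toContinuousLinearMap * Wop18 Ts n α (finRotate N k)

lemma finRotate_apply_of_neZero [NeZero N] (k : Fin N) : finRotate N k = k + 1 := by
  rcases N with _ | n
  · exact absurd rfl (NeZero.ne 0)
  · exact finRotate_succ_apply k

lemma bigU_apply (Ts : Fin m → (X ≃ₗᵢ[𝕜] X))
    (y : PiLp (ENNReal.ofReal p) (fun _ : (Fin N → Fin m) × Fin N => X))
    (i : (Fin N → Fin m) × Fin N) :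
    bigU p m N Ts y i = Ts (i.1 i.2) (y (i.1, finRotate N i.2)) := rfl

lemma bigJ_apply (x : X) (i : (Fin N → Fin m) × Fin N) :
    bigJ (𝕜 := 𝕜) p m N x i = ((((N * m ^ N : ℝ)) ^ (-(1 / p)) : ℝ) : 𝕜) • x := rfl

/-- Coordinates of the iterates of `U`. -/
lemma bigU_iterate_apply (Ts : Fin m → (X ≃ₗᵢ[𝕜] X)) (n : ℕ)
    (y : PiLp (ENNReal.ofReal p) (fun _ : (Fin N → Fin m) × Fin N => X))
    (i : (Fin N → Fin m) × Fin N) :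
    ((bigU p m N Ts)^[n] y) i = Wop18 m N Ts n i.1 i.2 (y (i.1, (finRotate N)^[n] i.2)) := by
  induction n generalizing y i with
  | zero => rfl
  | succ n ih =>
    rw [Function.iterate_succ_apply', bigU_apply, ih]
    simp only [Wop18, ContinuousLinearMap.mul_apply]
    rw [← Function.iterate_succ_apply]
    rfl

open Fin.NatCast in
/-- `W` in terms of `V` along the orbit of `k`. -/
lemma Wop18_eq_Vop18 [NeZero N] (Ts : Fin m → (X ≃ₗᵢ[𝕜] X)) (n : ℕ) (α : Fin N → Fin m)
    (k : Fin N) :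
    Wop18 m N Ts n α k = Vop18 m Ts n (fun j : Fin n => α (k + ((j : ℕ) : Fin N))) := by
  induction n generalizing k with
  | zero => rfl
  | succ n ih =>
    rw [Wop18, Vop18, ih]
    congr 1
    · congr 2
      simp
    · congr 1
      funext j
      congr 1
      rw [finRotate_apply_of_neZero]
      simp only [Function.comp_apply, Fin.val_succ, Nat.cast_add, Nat.cast_one]
      abel

/-- Summing a function of the first `n` coordinates over all of `Fin N → Fin m`. -/
lemma sum_restrict_eq {M : Type*} [AddCommMonoid M] {n : ℕ} (hn : n ≤ N)
    (G : (Fin n → Fin m) → M) :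
    ∑ α : Fin N → Fin m, G (fun j => α (Fin.castLE hn j))
      = m ^ (N - n) • ∑ β : Fin n → Fin m, G β := by
  classical
  let e1 : Fin N ≃ (Fin n ⊕ Fin (N - n)) :=
    (finCongr (Nat.add_sub_cancel' hn).symm).trans finSumFinEquiv.symm
  let E : (Fin N → Fin m) ≃ ((Fin n → Fin m) × (Fin (N - n) → Fin m)) :=
    (Equiv.arrowCongr e1 (Equiv.refl (Fin m))).trans
      (Equiv.sumArrowEquivProdArrow _ _ _)
  have key : ∀ (α : Fin N → Fin m) (j : Fin n), α (Fin.castLE hn j) = (E α).1 j := by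
    intro α j
    have h1 : Fin.castLE hn j = e1.symm (Sum.inl j) := by
      ext
      simp [e1]
    rw [h1]
    rfl
  calc ∑ α : Fin N → Fin m, G (fun j => α (Fin.castLE hn j))
      = ∑ bc : (Fin n → Fin m) × (Fin (N - n) → Fin m), G bc.1 := by
        refine Fintype.sum_equiv E _ _ fun α => ?_
        exact congrArg G (funext fun j => key α j)
    _ = ∑ β : Fin n → Fin m, ∑ _c : Fin (N - n) → Fin m, G β := by
        rw [Fintype.sum_prod_type]
    _ = ∑ β : Fin n → Fin m, (m ^ (N - n)) • G β := by
        refine Finset.sum_congr rfl fun β _ => ?_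
        rw [Finset.sum_const, Finset.card_univ]
        congr 1
        simp [Fintype.card_fun]
    _ = m ^ (N - n) • ∑ β : Fin n → Fin m, G β := (Finset.smul_sum).symm

open Fin.NatCast in
/-- The fibre count: summing `W n · k` over all `α` gives `m^{N-n}` copies of each word. -/
lemma sum_Wop18 [NeZero N] (Ts : Fin m → (X ≃ₗᵢ[𝕜] X)) {n : ℕ} (hn : n ≤ N) (k : Fin N) :
    ∑ α : Fin N → Fin m, Wop18 m N Ts n α k
      = m ^ (N - n) • ∑ β : Fin n → Fin m, Vop18 m Ts n β := by
  simp only [Wop18_eq_Vop18]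
  have hcast : ∀ j : Fin n, ((j : ℕ) : Fin N) = Fin.castLE hn j := by
    intro j
    ext
    simp [Nat.mod_eq_of_lt (lt_of_lt_of_le j.isLt hn)]
  have step1 : ∑ α : Fin N → Fin m, Vop18 m Ts n (fun j : Fin n => α (k + ((j : ℕ) : Fin N)))
      = ∑ α : Fin N → Fin m, Vop18 m Ts n (fun j : Fin n => α (Fin.castLE hn j)) := by
    refine Fintype.sum_equiv
      (Equiv.arrowCongr (Equiv.addLeft k).symm (Equiv.refl (Fin m))) _ _ fun α => ?_
    congr 1
    funext j
    simp [hcast j, Equiv.arrowCongr]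
  rw [step1]
  exact sum_restrict_eq m N hn _

/-- Power of the sum as a sum over words. -/
lemma sum_pow_eq_sum_Vop18 (Ts : Fin m → (X ≃ₗᵢ[𝕜] X)) (n : ℕ) :
    (∑ v : Fin m, (Ts v).toLinearIsometry.toContinuousLinearMap) ^ n
      = ∑ β : Fin n → Fin m, Vop18 m Ts n β := by
  induction n with
  | zero =>
    rw [pow_zero, Fintype.sum_unique]
    rfl
  | succ n ih =>
    rw [pow_succ', ih, Finset.sum_mul_sum]
    have hstep : ∑ β : Fin (n + 1) → Fin m, Vop18 m Ts (n + 1) β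
        = ∑ vb : Fin m × (Fin n → Fin m),
            (Ts vb.1).toLinearIsometry.toContinuousLinearMap * Vop18 m Ts n vb.2 := by
      refine (Fintype.sum_equiv (Fin.consEquiv fun _ => Fin m) _ _ fun vb => ?_).symm
      show (Ts vb.1).toLinearIsometry.toContinuousLinearMap * Vop18 m Ts n vb.2
          = Vop18 m Ts (n + 1) (Fin.cons vb.1 vb.2)
      have hc : Fin.cons vb.1 vb.2 ∘ Fin.succ = vb.2 := by
        funext j
        simp [Fin.cons_succ]
      rw [Vop18, Fin.cons_zero, hc]
    rw [hstep, Fintype.sum_prod_type]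

/-- For invertible isometries `T₁, …, T_m` on `X` and
`T = (1/m) ∑ₖ Tₖ`, the maps `J`, `Q`, `U` above give an isometry `J`, a contraction `Q`,
an invertible isometry `U` on `ℓ^p_{N·m^N}(X)`, and `Tⁿ = Q Uⁿ J` for all
`n ∈ {0, …, N}`. -/
theorem equal_weights_N_dilation (q : ℝ) (hp : 1 < p) (hpq : 1 / p + 1 / q = 1)
    (hm : 0 < m) (hN : 0 < N) (Ts : Fin m → (X ≃ₗᵢ[𝕜] X)) :
    (∀ x : X, ‖bigJ (𝕜 := 𝕜) p m N x‖ = ‖x‖) ∧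
    (∀ y : PiLp (ENNReal.ofReal p) (fun _ : (Fin N → Fin m) × Fin N => X),
      ‖bigQ (𝕜 := 𝕜) p m N q y‖ ≤ ‖y‖) ∧
    Function.Bijective (bigU p m N Ts) ∧
    (∀ y : PiLp (ENNReal.ofReal p) (fun _ : (Fin N → Fin m) × Fin N => X),
      ‖bigU p m N Ts y‖ = ‖y‖) ∧
    (∀ n : ℕ, n ≤ N → ∀ x : X,
      ((((m : 𝕜)⁻¹ • ∑ k, (Ts k).toLinearIsometry.toContinuousLinearMap : X →L[𝕜] X)) ^ n) x
        = bigQ (𝕜 := 𝕜) p m N q ((bigU p m N Ts)^[n] (bigJ (𝕜 := 𝕜) p m N x))) := by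
  haveI : NeZero N := ⟨hN.ne'⟩
  have hp0 : 0 < p := lt_trans one_pos hp
  haveI : Fact (1 ≤ ENNReal.ofReal p) := ⟨by
    rw [← ENNReal.ofReal_one]
    exact ENNReal.ofReal_le_ofReal hp.le⟩
  have htR : (ENNReal.ofReal p).toReal = p := ENNReal.toReal_ofReal hp0.le
  have htRpos : 0 < (ENNReal.ofReal p).toReal := by rw [htR]; exact hp0
  have hc : p.HolderConjugate q := Real.holderConjugate_iff.mpr ⟨hp, by rw [← one_div, ← one_div]; exact hpq⟩
  have hq0 : 0 < q := hc.symm.pos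
  set B : ℝ := (N : ℝ) * (m : ℝ) ^ N with hB_def
  have hB : 0 < B := mul_pos (Nat.cast_pos.mpr hN) (pow_pos (Nat.cast_pos.mpr hm) N)
  have hcardB : ((Fintype.card ((Fin N → Fin m) × Fin N) : ℕ) : ℝ) = B := by
    simp only [Fintype.card_prod, Fintype.card_fun, Fintype.card_fin, hB_def]
    push_cast
    ring
  -- (1) J is an isometry
  refine ⟨?_, ?_, ?_, ?_, ?_⟩
  · intro x
    rw [PiLp.norm_eq_sum htRpos]
    simp only [htR, bigJ_apply]
    rw [Finset.sum_const, Finset.card_univ, nsmul_eq_mul, hcardB,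
      norm_smul, RCLike.norm_ofReal, abs_of_pos (Real.rpow_pos_of_pos hB _),
      Real.mul_rpow (Real.rpow_pos_of_pos hB _).le (norm_nonneg x),
      ← Real.rpow_mul hB.le]
    have hexp : -(1 / p) * p = -1 := by field_simp
    rw [hexp, Real.rpow_neg_one, ← mul_assoc, mul_inv_cancel₀ hB.ne', one_mul,
      ← Real.rpow_mul (norm_nonneg x), mul_one_div, div_self hp0.ne', Real.rpow_one]
  -- (2) Q is a contraction
  · intro y
    have hQ : bigQ (𝕜 := 𝕜) p m N q y
        = ((B ^ (-(1 / q)) : ℝ) : 𝕜) • ∑ i : (Fin N → Fin m) × Fin N, y i := rfl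
    rw [hQ, norm_smul, RCLike.norm_ofReal, abs_of_pos (Real.rpow_pos_of_pos hB _)]
    have holder : ∑ i : (Fin N → Fin m) × Fin N, ‖y i‖
        ≤ B ^ (1 / q) * (∑ i : (Fin N → Fin m) × Fin N, ‖y i‖ ^ p) ^ (1 / p) := by
      have h := Real.inner_le_Lp_mul_Lq (Finset.univ)
        (fun _ : (Fin N → Fin m) × Fin N => (1 : ℝ)) (fun i => ‖y i‖) hc.symm
      simpa only [one_mul, abs_one, Real.one_rpow, Finset.sum_const, Finset.card_univ,
        nsmul_eq_mul, mul_one, abs_norm, hcardB] using h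
    calc B ^ (-(1 / q)) * ‖∑ i : (Fin N → Fin m) × Fin N, y i‖
        ≤ B ^ (-(1 / q)) * ∑ i : (Fin N → Fin m) × Fin N, ‖y i‖ :=
          mul_le_mul_of_nonneg_left (norm_sum_le _ _) (Real.rpow_pos_of_pos hB _).le
      _ ≤ B ^ (-(1 / q)) *
            (B ^ (1 / q) * (∑ i : (Fin N → Fin m) × Fin N, ‖y i‖ ^ p) ^ (1 / p)) :=
          mul_le_mul_of_nonneg_left holder (Real.rpow_pos_of_pos hB _).le
      _ = ‖y‖ := by
          rw [← mul_assoc, ← Real.rpow_add hB, neg_add_cancel, Real.rpow_zero, one_mul,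
            PiLp.norm_eq_sum htRpos, htR]
  -- (3) U is bijective
  · refine Function.bijective_iff_has_inverse.mpr
      ⟨fun y => (WithLp.equiv (ENNReal.ofReal p) (∀ _ : (Fin N → Fin m) × Fin N, X)).symm
        (fun i => (Ts (i.1 ((finRotate N).symm i.2))).symm (y (i.1, (finRotate N).symm i.2))),
        ?_, ?_⟩
    · intro y
      ext i
      show (Ts (i.1 ((finRotate N).symm i.2))).symm
          (bigU p m N Ts y (i.1, (finRotate N).symm i.2)) = y i
      rw [bigU_apply]
      simp only [LinearIsometryEquiv.symm_apply_apply]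
      exact congrArg y (by rw [Equiv.apply_symm_apply])
    · intro y
      ext i
      rw [bigU_apply]
      show Ts (i.1 i.2) ((Ts ((i.1) ((finRotate N).symm (finRotate N i.2)))).symm
          (y (i.1, (finRotate N).symm (finRotate N i.2)))) = y i
      have hrot : (finRotate N).symm (finRotate N i.2) = i.2 := Equiv.symm_apply_apply _ _
      rw [hrot, LinearIsometryEquiv.apply_symm_apply]
  -- (4) U is an isometry
  · intro y
    rw [PiLp.norm_eq_sum htRpos, PiLp.norm_eq_sum htRpos]
    congr 1
    have h1 : ∀ i : (Fin N → Fin m) × Fin N,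
        ‖bigU p m N Ts y i‖ ^ (ENNReal.ofReal p).toReal
          = ‖y ((Equiv.prodCongr (Equiv.refl (Fin N → Fin m)) (finRotate N)) i)‖
              ^ (ENNReal.ofReal p).toReal := by
      intro i
      rw [bigU_apply, LinearIsometryEquiv.norm_map]
      rfl
    rw [Finset.sum_congr rfl fun i _ => h1 i]
    exact Equiv.sum_comp (Equiv.prodCongr (Equiv.refl (Fin N → Fin m)) (finRotate N))
      (fun i => ‖y i‖ ^ (ENNReal.ofReal p).toReal)
  -- (5) the dilation identity
  · intro n hn x
    have lhs_eq : ((((m : 𝕜)⁻¹ •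
          ∑ k, (Ts k).toLinearIsometry.toContinuousLinearMap : X →L[𝕜] X)) ^ n) x
        = ((m : 𝕜)⁻¹) ^ n • (∑ β : Fin n → Fin m, Vop18 m Ts n β) x := by
      rw [smul_pow, sum_pow_eq_sum_Vop18 m Ts n, ContinuousLinearMap.smul_apply]
    have hsum : ∑ i : (Fin N → Fin m) × Fin N, Wop18 m N Ts n i.1 i.2 x
        = (((N * m ^ (N - n) : ℕ)) : 𝕜) • (∑ β : Fin n → Fin m, Vop18 m Ts n β) x := by
      calc ∑ i : (Fin N → Fin m) × Fin N, Wop18 m N Ts n i.1 i.2 x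
          = ∑ α : Fin N → Fin m, ∑ k : Fin N, Wop18 m N Ts n α k x := by
            rw [Fintype.sum_prod_type]
        _ = ∑ k : Fin N, ∑ α : Fin N → Fin m, Wop18 m N Ts n α k x := Finset.sum_comm
        _ = ∑ k : Fin N, (∑ α : Fin N → Fin m, Wop18 m N Ts n α k) x :=
            Finset.sum_congr rfl fun k _ => (ContinuousLinearMap.sum_apply _ _ _).symm
        _ = ∑ _k : Fin N, ((m ^ (N - n) : ℕ) • ∑ β : Fin n → Fin m, Vop18 m Ts n β) x :=
            Finset.sum_congr rfl fun k _ => by rw [sum_Wop18 m N Ts hn k]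
        _ = ∑ _k : Fin N, (((m ^ (N - n) : ℕ) : 𝕜) • ∑ β : Fin n → Fin m, Vop18 m Ts n β) x :=
            Finset.sum_congr rfl fun k _ => by rw [Nat.cast_smul_eq_nsmul 𝕜]
        _ = ∑ _k : Fin N, ((m ^ (N - n) : ℕ) : 𝕜) • (∑ β : Fin n → Fin m, Vop18 m Ts n β) x :=
            Finset.sum_congr rfl fun k _ => by rw [ContinuousLinearMap.smul_apply]
        _ = (N : 𝕜) • ((m ^ (N - n) : ℕ) : 𝕜) • (∑ β : Fin n → Fin m, Vop18 m Ts n β) x := by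
            rw [Finset.sum_const, Finset.card_univ, Fintype.card_fin,
              ← Nat.cast_smul_eq_nsmul 𝕜]
        _ = (((N * m ^ (N - n) : ℕ)) : 𝕜) • (∑ β : Fin n → Fin m, Vop18 m Ts n β) x := by
            rw [smul_smul]
            congr 1
            push_cast
            ring
    have rhs_eq : bigQ (𝕜 := 𝕜) p m N q ((bigU p m N Ts)^[n] (bigJ (𝕜 := 𝕜) p m N x))
        = ((B ^ (-(1 / q)) : ℝ) : 𝕜) • ((B ^ (-(1 / p)) : ℝ) : 𝕜) •
            (((N * m ^ (N - n) : ℕ)) : 𝕜) • (∑ β : Fin n → Fin m, Vop18 m Ts n β) x := by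
      have hcoord : ∀ i : (Fin N → Fin m) × Fin N,
          ((bigU p m N Ts)^[n] (bigJ (𝕜 := 𝕜) p m N x)) i
            = ((B ^ (-(1 / p)) : ℝ) : 𝕜) • Wop18 m N Ts n i.1 i.2 x := by
        intro i
        rw [bigU_iterate_apply, bigJ_apply]
        exact map_smul _ _ _
      have hQ : bigQ (𝕜 := 𝕜) p m N q ((bigU p m N Ts)^[n] (bigJ (𝕜 := 𝕜) p m N x))
          = ((B ^ (-(1 / q)) : ℝ) : 𝕜) • ∑ i : (Fin N → Fin m) × Fin N,
              ((bigU p m N Ts)^[n] (bigJ (𝕜 := 𝕜) p m N x)) i := rfl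
      rw [hQ, Finset.sum_congr rfl fun i _ => hcoord i, ← Finset.smul_sum, hsum]
    rw [lhs_eq, rhs_eq, smul_smul, smul_smul]
    congr 1
    have hreal : B ^ (-(1 / q)) * B ^ (-(1 / p)) * ((N * m ^ (N - n) : ℕ) : ℝ)
        = ((m : ℝ) ^ n)⁻¹ := by
      have h1 : B ^ (-(1 / q)) * B ^ (-(1 / p)) = B⁻¹ := by
        rw [← Real.rpow_add hB]
        have hxy : -(1 / q) + -(1 / p) = -1 := by linarith
        rw [hxy, Real.rpow_neg_one]
      have h2 : (m : ℝ) ^ (N - n) * (m : ℝ) ^ n = (m : ℝ) ^ N := by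
        rw [← pow_add]
        congr 1
        omega
      have hm0 : (m : ℝ) ≠ 0 := Nat.cast_ne_zero.mpr hm.ne'
      have hN0 : (N : ℝ) ≠ 0 := Nat.cast_ne_zero.mpr hN.ne'
      rw [h1, hB_def]
      push_cast
      field_simp
      linear_combination h2
    have hcast : ((B ^ (-(1 / q)) : ℝ) : 𝕜) * ((B ^ (-(1 / p)) : ℝ) : 𝕜)
          * (((N * m ^ (N - n) : ℕ)) : 𝕜)
        = ((B ^ (-(1 / q)) * B ^ (-(1 / p)) * ((N * m ^ (N - n) : ℕ) : ℝ) : ℝ) : 𝕜) := by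
      push_cast
      ring
    rw [hcast, hreal]
    rw [inv_pow]
    push_cast
    ring

end Stmt18
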